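/- With T_0, T_1,...,T_n and T_{n+1} = T_n^{μ_p} as in the iterative construction from a finite p-cyclically monotone operator {(x_i,x_i*)}_{i=1}^n, for every k = 1,...,n one has T_{n+1}(x_k) = T_n(x_k). -/

import Mathlib

open scoped BigOperators RealInnerProductSpace

/-- The cyclic sum `∑_{i=0}^{p} ⟨x_{i+1} - x_i, x_i*⟩` (indices mod `p+1`),
in a real Hilbert space identified with its dual. -/
def cycSumH {X : Type*} [NormedAddCommGroup X] [InnerProductSpace ℝ X] (p : ℕ)
    (z : Fin (p + 1) → X × X) : ℝ :=
  ∑ i, ⟪(z (i + 1)).1 - (z i).1, (z i).2⟫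

/-- `T` (identified with its graph) is `p`-cyclically monotone. -/
def CycMonoH {X : Type*} [NormedAddCommGroup X] [InnerProductSpace ℝ X] (p : ℕ)
    (T : Set (X × X)) : Prop :=
  ∀ z : Fin (p + 1) → X × X, (∀ i, z i ∈ T) → cycSumH p z ≤ 0

/-- The `p`-cyclically monotone polar of `T`. -/
def cycPolarH {X : Type*} [NormedAddCommGroup X] [InnerProductSpace ℝ X] (p : ℕ)
    (T : Set (X × X)) : Set (X × X) :=
  {w | ∀ z : Fin (p + 1) → X × X,
    z 0 = w → (∀ i, i ≠ 0 → z i ∈ T) → cycSumH p z ≤ 0}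

/-- Domain of a multivalued operator (graph). -/
def opDom {X Y : Type*} (T : Set (X × Y)) : Set X := {x | ∃ y, (x, y) ∈ T}

/-- Range of a multivalued operator (graph). -/
def opRan {X Y : Type*} (T : Set (X × Y)) : Set Y := {y | ∃ x, (x, y) ∈ T}

/-- Image of a multivalued operator (graph) at a point. -/
def opIm {X Y : Type*} (T : Set (X × Y)) (x : X) : Set Y := {y | (x, y) ∈ T}

namespace CFEAux

variable {X : Type*} [NormedAddCommGroup X] [InnerProductSpace ℝ X]

/-- Sum of inner products along the path `cur → l`, wrapping back to `a.1` at the end. -/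
def segSum (a : X × X) : X × X → List (X × X) → ℝ
  | cur, [] => ⟪a.1 - cur.1, cur.2⟫
  | cur, x :: t => ⟪x.1 - cur.1, cur.2⟫ + segSum a x t

@[simp] lemma segSum_nil (a cur : X × X) : segSum a cur [] = ⟪a.1 - cur.1, cur.2⟫ := rfl

@[simp] lemma segSum_cons (a cur x : X × X) (t : List (X × X)) :
    segSum a cur (x :: t) = ⟪x.1 - cur.1, cur.2⟫ + segSum a x t := rfl

lemma segSum_congr_head {a b : X × X} (hab : a.1 = b.1) :
    ∀ (l : List (X × X)) (cur : X × X), segSum a cur l = segSum b cur l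
  | [], cur => by simp [hab]
  | x :: t, cur => by rw [segSum_cons, segSum_cons, segSum_congr_head hab t x]

lemma segSum_split {a b : X × X} (hb : b.1 = a.1) (l2 : List (X × X)) :
    ∀ (l1 : List (X × X)) (cur : X × X),
      segSum a cur (l1 ++ b :: l2) = segSum a cur l1 + segSum a b l2
  | [], cur => by simp [hb]
  | x :: t, cur => by
      simp only [List.cons_append, segSum_cons, segSum_split hb l2 t x]; ring

lemma segSum_pad (a : X × X) :
    ∀ (l : List (X × X)) (cur : X × X) (k : ℕ),
      segSum a cur (l ++ List.replicate k (l.getLastD cur)) = segSum a cur l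
  | [], cur, k => by
      induction k with
      | zero => simp
      | succ k ih =>
          simp only [List.getLastD_nil, List.nil_append, List.replicate_succ, segSum_cons,
            sub_self, inner_zero_left, zero_add] at ih ⊢
          simpa using ih
  | x :: t, cur, k => by
      simp only [List.getLastD_cons, List.cons_append, segSum_cons, segSum_pad a t x k]

lemma segSum_eq_sum (a : X × X) :
    ∀ (l : List (X × X)) (cur : X × X),
      segSum a cur l =
        (∑ i : Fin l.length, ⟪((cur :: l).get i.succ).1 - ((cur :: l).get i.castSucc).1,
          ((cur :: l).get i.castSucc).2⟫) + ⟪a.1 - (l.getLastD cur).1, (l.getLastD cur).2⟫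
  | [], cur => by simp
  | x :: t, cur => by
      rw [segSum_cons, segSum_eq_sum a t x]
      erw [Fin.sum_univ_succ]
      simp only [List.getLastD_cons, List.length_cons]
      have e1 : ((cur :: x :: t).get (0 : Fin (t.length + 1)).succ) = x := rfl
      have e2 : ((cur :: x :: t).get (0 : Fin (t.length + 1)).castSucc) = cur := rfl
      rw [e1, e2]
      have e3 : ∀ i : Fin t.length,
          (cur :: x :: t).get i.succ.succ = (x :: t).get i.succ := fun i => rfl
      have e4 : ∀ i : Fin t.length,
          (cur :: x :: t).get i.succ.castSucc = (x :: t).get i.castSucc := by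
        intro i
        rw [← Fin.succ_castSucc]
        rfl
      simp only [e3, e4]
      ring


lemma get_cons_last {α : Type*} : ∀ (l : List α) (a : α),
    (a :: l).get (Fin.last l.length) = l.getLastD a
  | [], a => rfl
  | x :: t, a => by
      rw [List.getLastD_cons]
      exact get_cons_last t x

lemma get_cons_mem {α : Type*} (a : α) (l : List α) (j : Fin (l.length + 1)) (hj : j ≠ 0) :
    (a :: l).get j ∈ l := by
  cases j using Fin.cases with
  | zero => exact absurd rfl hj
  | succ i => rw [List.get_cons_succ']; exact l.get_mem _

lemma getLastD_mem_cons {α : Type*} : ∀ (l : List α) (x c : α),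
    (x :: l).getLastD c ∈ x :: l
  | [], x, c => by simp
  | y :: t, x, c => by
      rw [List.getLastD_cons]
      exact List.mem_cons_of_mem _ (getLastD_mem_cons t y x)

lemma cycSumH_eq_segSum {p : ℕ} (a : X × X) (l : List (X × X)) (hl : l.length = p)
    (z : Fin (p + 1) → X × X)
    (hz : ∀ i : Fin (p + 1), z i = (a :: l).get (Fin.cast (by simp [hl]) i)) :
    cycSumH p z = segSum a a l := by
  subst hl
  simp only [Fin.cast_refl, id] at hz
  rw [cycSumH, Fin.sum_univ_castSucc, segSum_eq_sum]
  have hlast : ∀ i : Fin l.length, (i.castSucc : Fin (l.length + 1)) + 1 = i.succ :=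
    fun i => Fin.coeSucc_eq_succ
  congr 1
  · apply Finset.sum_congr rfl
    intro i _
    rw [hz, hz, hlast i]
  · rw [hz, hz, Fin.last_add_one, get_cons_last]
    rfl

lemma cycSumH_rot {p : ℕ} (z : Fin (p + 1) → X × X) (i0 : Fin (p + 1)) :
    cycSumH p (fun i => z (i + i0)) = cycSumH p z := by
  unfold cycSumH
  refine Fintype.sum_equiv (Equiv.addRight i0) _ _ (fun i => ?_)
  simp only [Equiv.coe_addRight]
  rw [add_right_comm]

lemma subset_cycPolarH {p : ℕ} {T : Set (X × X)} (h : CycMonoH p T) : T ⊆ cycPolarH p T := by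
  intro w hw z hz0 hzi
  refine h z (fun i => ?_)
  by_cases hi : i = 0
  · rw [hi, hz0]; exact hw
  · exact hzi i hi

lemma cycPolarH_anti {p : ℕ} {S T : Set (X × X)} (h : S ⊆ T) :
    cycPolarH p T ⊆ cycPolarH p S :=
  fun w hw z hz0 hzi => hw z hz0 (fun i hi => h (hzi i hi))

lemma segSum_nonpos_of_polar {p : ℕ} {T : Set (X × X)} {a : X × X}
    (hv : a ∈ cycPolarH p T) :
    ∀ l : List (X × X), (∀ x ∈ l, x ∈ T) → l.length ≤ p → segSum a a l ≤ 0 := by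
  rintro (_ | ⟨x, t⟩) hlT hlp
  · simp
  · set d := (x :: t).getLastD a with hd
    have hdmem : d ∈ x :: t := getLastD_mem_cons t x a
    set l' := (x :: t) ++ List.replicate (p - (x :: t).length) d with hl'
    have hlen : l'.length = p := by
      simp only [hl', List.length_append, List.length_replicate]
      omega
    have hpad : segSum a a l' = segSum a a (x :: t) := segSum_pad a (x :: t) a _
    set z : Fin (p + 1) → X × X := fun i => (a :: l').get (Fin.cast (by simp [hlen]) i) with hzdef
    have hz0 : z 0 = a := rfl
    have hzmem : ∀ i, i ≠ 0 → z i ∈ T := by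
      intro i hi
      have : z i ∈ l' := by
        apply get_cons_mem
        simp only [ne_eq, Fin.ext_iff, Fin.coe_cast, Fin.val_zero] at hi ⊢
        omega
      rcases List.mem_append.mp this with h1 | h1
      · exact hlT _ h1
      · rw [List.eq_of_mem_replicate h1]
        exact hlT _ hdmem
    have hle := hv z hz0 hzmem
    rwa [cycSumH_eq_segSum a l' hlen z (fun i => rfl), hpad] at hle

lemma segSum_union_nonpos {p : ℕ} {T : Set (X × X)} {a₀ : X} :
    ∀ (m : ℕ) (l : List (X × X)), l.length ≤ m → l.length ≤ p →
      (∀ x ∈ l, x ∈ ({a₀} ×ˢ opIm (cycPolarH p T) a₀) ∪ T) →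
      ∀ v : X, (a₀, v) ∈ cycPolarH p T → segSum (a₀, v) (a₀, v) l ≤ 0 := by
  intro m
  induction m with
  | zero =>
      intro l hm _ _ v _
      rw [List.length_eq_zero_iff.mp (Nat.le_zero.mp hm)]
      simp
  | succ m ih =>
      intro l hm hp hl v hv
      by_cases hS : ∃ b ∈ l, b ∈ ({a₀} ×ˢ opIm (cycPolarH p T) a₀)
      · obtain ⟨b, hbl, hbS⟩ := hS
        obtain ⟨l1, l2, rfl⟩ := List.append_of_mem hbl
        rw [Set.mem_prod] at hbS
        have hb1 : b.1 = a₀ := hbS.1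
        have hb2 : (a₀, b.2) ∈ cycPolarH p T := hbS.2
        have hlen : l1.length + (l2.length + 1) = (l1 ++ b :: l2).length := by simp
        rw [segSum_split (show b.1 = ((a₀, v) : X × X).1 from hb1) l2 l1]
        have h1 : segSum (a₀, v) (a₀, v) l1 ≤ 0 :=
          ih l1 (by omega) (by omega) (fun x hx => hl x (by simp [hx])) v hv
        have h2 : segSum (a₀, v) b l2 ≤ 0 := by
          have hbb : b = (a₀, b.2) := Prod.ext hb1 rfl
          rw [segSum_congr_head (show ((a₀, v) : X × X).1 = ((a₀, b.2) : X × X).1 from rfl) l2 b,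
            hbb]
          exact ih l2 (by omega) (by omega)
            (fun x hx => hl x (by simp [hx])) b.2 hb2
        linarith
      · push_neg at hS
        exact segSum_nonpos_of_polar hv l (fun x hx => (hl x hx).resolve_left (hS x hx)) hp

lemma cycMonoH_union {p : ℕ} {T : Set (X × X)} (hT : CycMonoH p T) (a₀ : X) :
    CycMonoH p (({a₀} ×ˢ opIm (cycPolarH p T) a₀) ∪ T) := by
  intro z hz
  by_cases hS : ∃ i0, z i0 ∈ ({a₀} ×ˢ opIm (cycPolarH p T) a₀)
  · obtain ⟨i0, hi0⟩ := hS
    set z' : Fin (p + 1) → X × X := fun i => z (i + i0) with hz'def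
    have hrot : cycSumH p z' = cycSumH p z := cycSumH_rot z i0
    have hz'0 : z' 0 = z i0 := by simp [hz'def]
    rw [Set.mem_prod] at hi0
    have h1 : (z i0).1 = a₀ := hi0.1
    have h2 : (a₀, (z i0).2) ∈ cycPolarH p T := hi0.2
    have hl : (List.ofFn (fun i : Fin p => z' i.succ)).length = p := List.length_ofFn
    have hbridge : cycSumH p z' =
        segSum (z' 0) (z' 0) (List.ofFn (fun i : Fin p => z' i.succ)) := by
      apply cycSumH_eq_segSum (z' 0) _ hl z'
      intro i
      cases i using Fin.cases with
      | zero => rfl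
      | succ j =>
          have hc : (Fin.cast (show p + 1 = (List.ofFn (fun i : Fin p => z' i.succ)).length + 1
                by simp [hl]) j.succ)
              = (Fin.cast hl.symm j).succ := by
            ext; simp
          rw [hc, List.get_cons_succ', List.get_ofFn]
          congr 1
    have hhead : z' 0 = (a₀, (z i0).2) := by
      rw [hz'0]; exact Prod.ext h1 rfl
    have hmem : ∀ x ∈ List.ofFn (fun i : Fin p => z' i.succ),
        x ∈ ({a₀} ×ˢ opIm (cycPolarH p T) a₀) ∪ T := by
      intro x hx
      rw [List.mem_ofFn] at hx
      obtain ⟨i, rfl⟩ := hx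
      exact hz _
    rw [← hrot, hbridge, hhead]
    exact segSum_union_nonpos p _ hl.le hl.le hmem (z i0).2 h2
  · push_neg at hS
    exact hT z (fun i => (hz i).resolve_left (hS i))

end CFEAux

open CFEAux

theorem construction_fiber_eq {X : Type*} [NormedAddCommGroup X] [InnerProductSpace ℝ X]
    (p n : ℕ) (w : Fin n → X × X) (T : ℕ → Set (X × X))
    (hmono : CycMonoH p (Set.range w))
    (hT0 : T 0 = Set.range w)
    (hTk : ∀ k : Fin n, T ((k : ℕ) + 1) =
      ({(w k).1} ×ˢ opIm (cycPolarH p (T (k : ℕ))) (w k).1) ∪ T (k : ℕ))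
    (hTn1 : T (n + 1) = cycPolarH p (T n)) :
    ∀ k : Fin n, opIm (T (n + 1)) (w k).1 = opIm (T n) (w k).1 := by
  have hstep : ∀ k : ℕ, k < n → T k ⊆ T (k + 1) := by
    intro k hk
    have := hTk ⟨k, hk⟩
    simp only at this
    rw [this]
    exact Set.subset_union_right
  have hchain : ∀ j k : ℕ, j ≤ k → k ≤ n → T j ⊆ T k := by
    intro j k hjk hkn
    induction k with
    | zero => rw [Nat.le_zero.mp hjk]
    | succ k ih =>
        rcases Nat.eq_or_lt_of_le hjk with h | h
        · rw [h]
        · exact (ih (by omega) (by omega)).trans (hstep k (by omega))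
  have hmonoT : ∀ k : ℕ, k ≤ n → CycMonoH p (T k) := by
    intro k
    induction k with
    | zero => intro _; rw [hT0]; exact hmono
    | succ k ih =>
        intro hk
        have := hTk ⟨k, by omega⟩
        simp only at this
        rw [this]
        exact cycMonoH_union (ih (by omega)) _
  intro k
  apply Set.Subset.antisymm
  · intro y hy
    have hy' : ((w k).1, y) ∈ cycPolarH p (T n) := by
      rw [← hTn1]; exact hy
    have h1 : ((w k).1, y) ∈ cycPolarH p (T (k : ℕ)) :=
      cycPolarH_anti (hchain (k : ℕ) n (by omega) le_rfl) hy'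
    have h2 : ((w k).1, y) ∈ T ((k : ℕ) + 1) := by
      rw [hTk k]
      left
      exact Set.mem_prod.mpr ⟨rfl, h1⟩
    exact hchain ((k : ℕ) + 1) n (by omega) le_rfl h2
  · intro y hy
    have : ((w k).1, y) ∈ cycPolarH p (T n) :=
      subset_cycPolarH (hmonoT n le_rfl) hy
    rw [show opIm (T (n + 1)) (w k).1 = opIm (cycPolarH p (T n)) (w k).1 from by rw [hTn1]]
    exact this
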